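/- For every integer m ≥ 1, ∏_{k=1}^{m} cos(kπ/(2m+1)) = 1/2^{m}. -/

import Mathlib

open Real BigOperators

/-- `∏_{k=1}^{m} cos(kπ/(2m+1)) = 1/2^m` for every `m ≥ 1`. -/
theorem prod_cos_multiples (m : ℕ) (hm : 1 ≤ m) :
    ∏ k ∈ Finset.Icc 1 m, Real.cos ((k : ℝ) * Real.pi / (2 * (m : ℝ) + 1)) =
      1 / 2 ^ m := by
  have hn : (0:ℝ) < 2 * (m:ℝ) + 1 := by positivity
  have hn' : (2 * (m:ℝ) + 1) ≠ 0 := ne_of_gt hn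
  -- positivity of sines
  have hsin_pos : ∀ k ∈ Finset.Icc 1 m,
      0 < Real.sin ((k : ℝ) * Real.pi / (2 * (m : ℝ) + 1)) := by
    intro k hk
    simp only [Finset.mem_Icc] at hk
    obtain ⟨hk1, hk2⟩ := hk
    apply Real.sin_pos_of_pos_of_lt_pi
    · apply div_pos (mul_pos _ Real.pi_pos) hn
      exact_mod_cast Nat.pos_of_ne_zero (by omega)
    · rw [div_lt_iff₀ hn]
      have : (k:ℝ) < 2 * (m:ℝ) + 1 := by
        have : (k:ℝ) ≤ (m:ℝ) := by exact_mod_cast hk2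
        linarith
      nlinarith [Real.pi_pos]
  set S := ∏ k ∈ Finset.Icc 1 m, Real.sin ((k : ℝ) * Real.pi / (2 * (m : ℝ) + 1)) with hS
  have S_pos : 0 < S := Finset.prod_pos hsin_pos
  -- the reindexing identity
  have key : ∏ k ∈ Finset.Icc 1 m,
      Real.sin (2 * ((k : ℝ) * Real.pi / (2 * (m : ℝ) + 1))) = S := by
    rw [hS]
    apply Finset.prod_nbij' (i := fun k => if 2*k ≤ m then 2*k else 2*m+1-2*k)
      (j := fun j => if j % 2 = 0 then j/2 else (2*m+1-j)/2)
    · intro a ha; simp only [Finset.mem_Icc] at *; split_ifs <;> omega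
    · intro a ha; simp only [Finset.mem_Icc] at *; split_ifs <;> omega
    · intro a ha; simp only [Finset.mem_Icc] at ha; split_ifs <;> omega
    · intro a ha; simp only [Finset.mem_Icc] at ha; split_ifs <;> omega
    · intro k hk
      simp only [Finset.mem_Icc] at hk
      split_ifs with h
      · push_cast
        ring_nf
      · have hle : 2*k ≤ 2*m := by omega
        have hcast : ((2*m+1-2*k : ℕ) : ℝ) = 2*(m:ℝ)+1-2*(k:ℝ) := by
          push_cast [Nat.cast_sub (by omega : 2*k ≤ 2*m+1)]
          ring
        rw [hcast]
        have harg : (2*(m:ℝ)+1-2*(k:ℝ)) * Real.pi / (2 * (m:ℝ) + 1)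
            = Real.pi - 2 * ((k : ℝ) * Real.pi / (2 * (m : ℝ) + 1)) := by
          field_simp
        rw [harg, Real.sin_pi_sub]
  -- expand the double angle
  have expand : ∏ k ∈ Finset.Icc 1 m,
      Real.sin (2 * ((k : ℝ) * Real.pi / (2 * (m : ℝ) + 1)))
      = 2 ^ m * S * ∏ k ∈ Finset.Icc 1 m,
          Real.cos ((k : ℝ) * Real.pi / (2 * (m : ℝ) + 1)) := by
    rw [hS]
    calc ∏ k ∈ Finset.Icc 1 m,
        Real.sin (2 * ((k : ℝ) * Real.pi / (2 * (m : ℝ) + 1)))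
        = ∏ k ∈ Finset.Icc 1 m,
          (2 * Real.sin ((k : ℝ) * Real.pi / (2 * (m : ℝ) + 1))
             * Real.cos ((k : ℝ) * Real.pi / (2 * (m : ℝ) + 1))) := by
          apply Finset.prod_congr rfl
          intro k _
          rw [Real.sin_two_mul]
      _ = _ := by
          rw [Finset.prod_mul_distrib, Finset.prod_mul_distrib,
            Finset.prod_const, Nat.card_Icc]
          simp [mul_assoc]
  rw [expand] at key
  set C := ∏ k ∈ Finset.Icc 1 m, Real.cos ((k : ℝ) * Real.pi / (2 * (m : ℝ) + 1))
  have h2 : (2:ℝ)^m ≠ 0 := by positivity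
  field_simp
  nlinarith [key, S_pos]
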